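/- Let N ≥ 2 and suppose A_0, …, A_{2N−1} are complex N×N matrices satisfying: Aᴴ_k·A_l + Aᴴ_l·A_k = 0 for all 0 ≤ k ≠ l ≤ 2N−1; Aᴴ_{2k}·A_{2k} + Aᴴ_{2k+1}·A_{2k+1} is invertible for every 0 ≤ k ≤ N−1; and Aᴴ_k·A_k is not invertible for at least one k. Then N = 2, N = 4 or N = 8. -/

import Mathlib

open Matrix Module

/-- If `J * g = -(g * J)`, then `g` maps the generalized `μ`-eigenspace of `J`
into the generalized `(-μ)`-eigenspace. -/
lemma RFSDD.mapsTo_maxGenEigenspace_neg {V : Type*} [AddCommGroup V] [Module ℂ V]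
    {J g : Module.End ℂ V} (h : J * g = -(g * J)) (μ : ℂ) :
    Set.MapsTo g (J.maxGenEigenspace μ) (J.maxGenEigenspace (-μ)) := by
  intro x hx
  rw [SetLike.mem_coe, Module.End.mem_maxGenEigenspace] at hx ⊢
  obtain ⟨k, hk⟩ := hx
  refine ⟨k, ?_⟩
  have hstep : (J - (-μ) • 1) * g = (-1 : ℂ) • (g * (J - μ • 1)) := by
    rw [sub_mul, mul_sub, h, smul_mul_assoc, one_mul, mul_smul_comm, mul_one]
    module
  have key : ∀ n : ℕ, (J - (-μ) • 1) ^ n * g = ((-1 : ℂ) ^ n) • (g * (J - μ • 1) ^ n) := by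
    intro n
    induction n with
    | zero => simp
    | succ n ih =>
        calc (J - (-μ) • 1) ^ (n + 1) * g
            = (J - (-μ) • 1) ^ n * ((J - (-μ) • 1) * g) := by rw [pow_succ, mul_assoc]
          _ = (-1 : ℂ) • ((J - (-μ) • 1) ^ n * g * (J - μ • 1)) := by
              rw [hstep, mul_smul_comm, mul_assoc]
          _ = (-1 : ℂ) • ((((-1 : ℂ) ^ n) • (g * (J - μ • 1) ^ n)) * (J - μ • 1)) := by
              rw [ih]
          _ = ((-1 : ℂ) ^ (n + 1)) • (g * (J - μ • 1) ^ (n + 1)) := by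
              rw [smul_mul_assoc, smul_smul, ← pow_succ', mul_assoc, ← pow_succ]
  calc ((J - (-μ) • (1 : Module.End ℂ V)) ^ k) (g x)
      = ((J - (-μ) • 1) ^ k * g) x := rfl
    _ = ((-1 : ℂ) ^ k) • (g (((J - μ • 1) ^ k) x)) := by rw [key k]; rfl
    _ = 0 := by rw [hk, map_zero, smul_zero]

/-- `m` pairwise anticommuting bijective endomorphisms of a nonzero f.d. complex
vector space force `2 ^ (m / 2) ∣ dim`. -/
lemma RFSDD.key (m : ℕ) (V : Type) [AddCommGroup V] [Module ℂ V] [FiniteDimensional ℂ V]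
    (T : Fin m → Module.End ℂ V)
    (hbij : ∀ i, Function.Bijective (T i))
    (hanti : ∀ i j, i ≠ j → T i * T j = -(T j * T i)) :
    2 ^ (m / 2) ∣ Module.finrank ℂ V := by
  rcases Nat.lt_or_ge m 2 with hm | hm
  · simp [Nat.div_eq_of_lt hm]
  obtain ⟨m', hm'⟩ : ∃ m', m = m' + 2 := ⟨m - 2, by omega⟩
  by_cases hV0 : Module.finrank ℂ V = 0
  · simp [hV0]
  have : Nontrivial V := Module.nontrivial_of_finrank_pos (R := ℂ) (Nat.pos_of_ne_zero hV0)
  set i₁ : Fin m := ⟨m', by omega⟩ with hi₁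
  set i₂ : Fin m := ⟨m' + 1, by omega⟩ with hi₂
  have hne : i₁ ≠ i₂ := by simp [hi₁, hi₂, Fin.ext_iff]
  set J := T i₁ * T i₂ with hJdef
  have hJbij : Function.Bijective J := by
    have h := Function.Bijective.comp (hbij i₁) (hbij i₂)
    rwa [← LinearMap.coe_comp, ← Module.End.mul_eq_comp] at h
  obtain ⟨μ, hμ⟩ := Module.End.exists_eigenvalue J
  obtain ⟨v, hv⟩ := hμ.exists_hasEigenvector
  have hμ0 : μ ≠ 0 := by
    rintro rfl
    have h1 : J v = J 0 := by simpa using hv.apply_eq_smul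
    exact hv.2 (hJbij.injective h1)
  have hμne : μ ≠ -μ := by
    intro h
    apply hμ0
    have h2 : (2 : ℂ) * μ = 0 := by linear_combination h
    rcases mul_eq_zero.mp h2 with h | h
    · norm_num at h
    · exact h
  set G : Submodule ℂ V := J.maxGenEigenspace μ with hG
  set G' : Submodule ℂ V := J.maxGenEigenspace (-μ) with hG'
  set W : Submodule ℂ V := G ⊔ G' with hW
  -- commutation facts
  have hcomm : ∀ i : Fin m, i.val < m' → Commute J (T i) := by
    intro i hi
    have h1 : T i₁ * T i = -(T i * T i₁) := hanti i₁ i (by simp [hi₁, Fin.ext_iff]; omega)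
    have h2 : T i₂ * T i = -(T i * T i₂) := hanti i₂ i (by simp [hi₂, Fin.ext_iff]; omega)
    show J * T i = T i * J
    calc J * T i = T i₁ * (T i₂ * T i) := by rw [hJdef, mul_assoc]
      _ = T i₁ * -(T i * T i₂) := by rw [h2]
      _ = -((T i₁ * T i) * T i₂) := by rw [mul_neg, mul_assoc]
      _ = -((-(T i * T i₁)) * T i₂) := by rw [h1]
      _ = T i * J := by rw [neg_mul, neg_neg, mul_assoc, hJdef]
  have hJa1 : J * T i₁ = -(T i₁ * J) := by
    calc J * T i₁ = T i₁ * (T i₂ * T i₁) := by rw [hJdef, mul_assoc]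
      _ = T i₁ * -(T i₁ * T i₂) := by rw [hanti i₂ i₁ hne.symm]
      _ = -(T i₁ * J) := by rw [mul_neg, hJdef]
  have hJa2 : J * T i₂ = -(T i₂ * J) := by
    have h : T i₂ * J = -(J * T i₂) := by
      calc T i₂ * J = (T i₂ * T i₁) * T i₂ := by rw [hJdef, mul_assoc]
        _ = (-(T i₁ * T i₂)) * T i₂ := by rw [hanti i₂ i₁ hne.symm]
        _ = -(J * T i₂) := by rw [neg_mul, hJdef]
    rw [h, neg_neg]
  -- maps-to facts
  have hMG : ∀ i : Fin m, i.val < m' → Set.MapsTo (T i) G G :=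
    fun i hi => Module.End.mapsTo_maxGenEigenspace_of_comm (hcomm i hi) μ
  have hMG' : ∀ i : Fin m, i.val < m' → Set.MapsTo (T i) G' G' :=
    fun i hi => Module.End.mapsTo_maxGenEigenspace_of_comm (hcomm i hi) (-μ)
  have hT1G : Set.MapsTo (T i₁) G G' := RFSDD.mapsTo_maxGenEigenspace_neg hJa1 μ
  have hT1G' : Set.MapsTo (T i₁) G' G := by
    have := RFSDD.mapsTo_maxGenEigenspace_neg hJa1 (-μ)
    rwa [neg_neg] at this
  have hT2G : Set.MapsTo (T i₂) G G' := RFSDD.mapsTo_maxGenEigenspace_neg hJa2 μ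
  have hT2G' : Set.MapsTo (T i₂) G' G := by
    have := RFSDD.mapsTo_maxGenEigenspace_neg hJa2 (-μ)
    rwa [neg_neg] at this
  have hWmaps : ∀ i, Set.MapsTo (T i) W W := by
    intro i
    have hsub : (G : Set V) ⊆ W ∧ (G' : Set V) ⊆ W :=
      ⟨SetLike.coe_subset_coe.mpr le_sup_left, SetLike.coe_subset_coe.mpr le_sup_right⟩
    have hGW : Set.MapsTo (T i) G (W : Set V) ∧ Set.MapsTo (T i) G' (W : Set V) := by
      rcases lt_trichotomy i.val m' with h | h | h
      · exact ⟨(hMG i h).mono_right hsub.1, (hMG' i h).mono_right hsub.2⟩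
      · have : i = i₁ := by simp [hi₁, Fin.ext_iff, h]
        subst this
        exact ⟨hT1G.mono_right hsub.2, hT1G'.mono_right hsub.1⟩
      · have : i = i₂ := by
          have : i.val = m' + 1 := by omega
          simp [hi₂, Fin.ext_iff, this]
        subst this
        exact ⟨hT2G.mono_right hsub.2, hT2G'.mono_right hsub.1⟩
    intro x hx
    rcases Submodule.mem_sup.mp hx with ⟨a, ha, b, hb, rfl⟩
    rw [map_add]
    exact W.add_mem (hGW.1 ha) (hGW.2 hb)
  -- restrictions to G
  set TG : Fin m' → Module.End ℂ G :=
    fun i => (T (Fin.castLE (by omega : m' ≤ m) i)).restrict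
      (fun x hx => hMG _ i.isLt hx) with hTG
  have hTGbij : ∀ i, Function.Bijective (TG i) := by
    intro i
    have hinj : Function.Injective (TG i) := by
      intro x y hxy
      have h := congrArg Subtype.val hxy
      simp only [hTG, LinearMap.restrict_apply] at h
      exact Subtype.ext ((hbij _).injective h)
    exact ⟨hinj, LinearMap.injective_iff_surjective.mp hinj⟩
  have hTGanti : ∀ i j, i ≠ j → TG i * TG j = -(TG j * TG i) := by
    intro i j hij
    have hij' : (Fin.castLE (by omega : m' ≤ m) i) ≠ Fin.castLE (by omega) j :=
      fun h => hij (Fin.castLE_injective _ h)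
    apply LinearMap.ext
    intro x
    apply Subtype.ext
    have h := LinearMap.congr_fun (hanti _ _ hij') x.val
    simpa [hTG, Module.End.mul_apply, LinearMap.restrict_apply] using h
  have hdvdG : 2 ^ (m' / 2) ∣ Module.finrank ℂ G := RFSDD.key m' G TG hTGbij hTGanti
  -- dim G' = dim G
  have hrankGG' : Module.finrank ℂ G' = Module.finrank ℂ G := by
    have hf : Function.Injective ((T i₁).restrict
        (fun x hx => hT1G hx : ∀ x ∈ G, T i₁ x ∈ G')) := by
      intro x y hxy
      have h := congrArg Subtype.val hxy
      simp only [LinearMap.restrict_apply] at h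
      exact Subtype.ext ((hbij _).injective h)
    have hg : Function.Injective ((T i₁).restrict
        (fun x hx => hT1G' hx : ∀ x ∈ G', T i₁ x ∈ G)) := by
      intro x y hxy
      have h := congrArg Subtype.val hxy
      simp only [LinearMap.restrict_apply] at h
      exact Subtype.ext ((hbij _).injective h)
    exact le_antisymm (LinearMap.finrank_le_finrank_of_injective hg)
      (LinearMap.finrank_le_finrank_of_injective hf)
  have hdisj : Disjoint G G' := Module.End.disjoint_genEigenspace J hμne ⊤ ⊤
  have hWrank : Module.finrank ℂ W = 2 * Module.finrank ℂ G := by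
    have h := Submodule.finrank_sup_add_finrank_inf_eq G G'
    rw [hdisj.eq_bot] at h
    simp only [finrank_bot, add_zero] at h
    rw [← hW] at h
    omega
  -- G is nonzero
  have hvG : v ∈ G := by
    apply (J.genEigenspace μ).monotone le_top
    exact hv.1
  have hGpos : 0 < Module.finrank ℂ G := by
    rw [Module.finrank_pos_iff (R := ℂ)]
    exact nontrivial_of_ne ⟨v, hvG⟩ 0 (by simpa [Submodule.mk_eq_zero] using hv.2)
  -- quotient
  have hWle : ∀ i, W ≤ W.comap (T i) := fun i x hx => hWmaps i hx
  set TQ : Fin m → Module.End ℂ (V ⧸ W) :=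
    fun i => Submodule.mapQ W W (T i) (hWle i) with hTQ
  have hTQbij : ∀ i, Function.Bijective (TQ i) := by
    intro i
    have hsurj : Function.Surjective (TQ i) := by
      intro y
      obtain ⟨x, rfl⟩ := W.mkQ_surjective y
      obtain ⟨z, rfl⟩ := (hbij i).surjective x
      exact ⟨W.mkQ z, by simp [hTQ, Submodule.mapQ_apply]⟩
    exact ⟨LinearMap.injective_iff_surjective.mpr hsurj, hsurj⟩
  have hTQanti : ∀ i j, i ≠ j → TQ i * TQ j = -(TQ j * TQ i) := by
    intro i j hij
    apply Submodule.linearMap_qext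
    apply LinearMap.ext
    intro x
    have h := LinearMap.congr_fun (hanti i j hij) x
    simp only [Module.End.mul_apply] at h
    simp [hTQ, Submodule.mapQ_apply, Module.End.mul_apply, h]
  have hQrank : Module.finrank ℂ (V ⧸ W) + Module.finrank ℂ W = Module.finrank ℂ V :=
    Submodule.finrank_quotient_add_finrank W
  have hQlt : Module.finrank ℂ (V ⧸ W) < Module.finrank ℂ V := by omega
  have hdvdQ : 2 ^ (m / 2) ∣ Module.finrank ℂ (V ⧸ W) :=
    RFSDD.key m (V ⧸ W) TQ hTQbij hTQanti
  -- combine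
  have hpow : m / 2 = m' / 2 + 1 := by omega
  rw [← hQrank]
  apply dvd_add hdvdQ
  rw [hWrank, hpow, pow_succ]
  calc 2 ^ (m' / 2) * 2 = 2 * 2 ^ (m' / 2) := by ring
    _ ∣ 2 * Module.finrank ℂ G := mul_dvd_mul_left 2 hdvdG
termination_by (m, Module.finrank ℂ V)
decreasing_by
  · exact Prod.Lex.left _ _ (by omega)
  · exact Prod.Lex.right _ hQlt

/-- If a rate-one square restricted full-rank single-symbol decodable design
(RFSDD) of size `N` exists (i.e. `2N` weight matrices with pairwise
anticommuting Grams, invertible Gram-sums per variable, and at least one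
singular Gram matrix), then `N = 2`, `N = 4` or `N = 8`. -/
theorem rate_one_square_RFSDD_size
    (N : ℕ) (hN : 2 ≤ N) (A : ℕ → Matrix (Fin N) (Fin N) ℂ)
    (hanti : ∀ k l, k < 2*N → l < 2*N → k ≠ l → (A k)ᴴ * A l + (A l)ᴴ * A k = 0)
    (hsum : ∀ k < N, IsUnit ((A (2*k))ᴴ * A (2*k) + (A (2*k+1))ᴴ * A (2*k+1)))
    (hsing : ∃ k < 2*N, ¬ IsUnit ((A k)ᴴ * A k)) :
    N = 2 ∨ N = 4 ∨ N = 8 := by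
  classical
  set B : ℕ → Matrix (Fin N) (Fin N) ℂ := fun k => A (2*k) + A (2*k+1) with hB
  have hBgram : ∀ k < N, (B k)ᴴ * B k
      = (A (2*k))ᴴ * A (2*k) + (A (2*k+1))ᴴ * A (2*k+1) := by
    intro k hk
    have h := hanti (2*k) (2*k+1) (by omega) (by omega) (by omega)
    calc (B k)ᴴ * B k
        = ((A (2*k))ᴴ * A (2*k) + (A (2*k+1))ᴴ * A (2*k+1))
          + ((A (2*k))ᴴ * A (2*k+1) + (A (2*k+1))ᴴ * A (2*k)) := by
          simp only [hB, conjTranspose_add]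
          noncomm_ring
      _ = _ := by rw [h, add_zero]
  have hBanti : ∀ k l, k < N → l < N → k ≠ l →
      (B k)ᴴ * B l + (B l)ᴴ * B k = 0 := by
    intro k l hk hl hkl
    have h1 := hanti (2*k) (2*l) (by omega) (by omega) (by omega)
    have h2 := hanti (2*k) (2*l+1) (by omega) (by omega) (by omega)
    have h3 := hanti (2*k+1) (2*l) (by omega) (by omega) (by omega)
    have h4 := hanti (2*k+1) (2*l+1) (by omega) (by omega) (by omega)
    calc (B k)ᴴ * B l + (B l)ᴴ * B k
        = ((A (2*k))ᴴ * A (2*l) + (A (2*l))ᴴ * A (2*k))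
          + ((A (2*k))ᴴ * A (2*l+1) + (A (2*l+1))ᴴ * A (2*k))
          + ((A (2*k+1))ᴴ * A (2*l) + (A (2*l))ᴴ * A (2*k+1))
          + ((A (2*k+1))ᴴ * A (2*l+1) + (A (2*l+1))ᴴ * A (2*k+1)) := by
          simp only [hB, conjTranspose_add]
          noncomm_ring
      _ = 0 := by rw [h1, h2, h3, h4]; simp
  have hBunit : ∀ k < N, IsUnit (B k) := by
    intro k hk
    have hU : IsUnit ((B k)ᴴ * B k) := by rw [hBgram k hk]; exact hsum k hk
    rw [Matrix.isUnit_iff_isUnit_det] at hU ⊢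
    rw [Matrix.det_mul, Matrix.det_conjTranspose] at hU
    exact isUnit_of_mul_isUnit_right hU
  have hd0 : IsUnit (B 0).det := (Matrix.isUnit_iff_isUnit_det _).mp (hBunit 0 (by omega))
  have hd0' : IsUnit ((B 0)ᴴ).det := by
    rw [Matrix.det_conjTranspose]; exact hd0.star
  set C : Fin (N-1) → Matrix (Fin N) (Fin N) ℂ :=
    fun i => B (i.val+1) * (B 0)⁻¹ with hC
  have hCskew : ∀ i, (C i)ᴴ = -(C i) := by
    intro i
    have hi : i.val + 1 < N := by omega
    have h := hBanti (i.val+1) 0 hi (by omega) (by omega)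
    have hk : (B (i.val+1))ᴴ * B 0 = -((B 0)ᴴ * B (i.val+1)) :=
      eq_neg_of_add_eq_zero_left h
    have e1 : (B (i.val+1))ᴴ = -((B 0)ᴴ * B (i.val+1) * (B 0)⁻¹) := by
      have h2 := congrArg (fun M => M * (B 0)⁻¹) hk
      simpa [Matrix.mul_nonsing_inv_cancel_right _ _ hd0, neg_mul] using h2
    calc (C i)ᴴ = ((B 0)ᴴ)⁻¹ * (B (i.val+1))ᴴ := by
          rw [hC]
          simp only [conjTranspose_mul, Matrix.conjTranspose_nonsing_inv]
      _ = ((B 0)ᴴ)⁻¹ * -((B 0)ᴴ * B (i.val+1) * (B 0)⁻¹) := by rw [e1]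
      _ = -(C i) := by
          rw [mul_neg, mul_assoc ((B 0)ᴴ), Matrix.nonsing_inv_mul_cancel_left _ _ hd0', hC]
  have hCanti : ∀ i j : Fin (N-1), i ≠ j → C i * C j = -(C j * C i) := by
    intro i j hij
    have hij' : i.val + 1 ≠ j.val + 1 := by
      simp only [ne_eq, add_left_inj]
      exact fun h => hij (Fin.ext h)
    have hg := hBanti (i.val+1) (j.val+1) (by omega) (by omega) hij'
    have t1 : (C i)ᴴ * C j
        = ((B 0)ᴴ)⁻¹ * ((B (i.val+1))ᴴ * B (j.val+1) * (B 0)⁻¹) := by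
      simp only [hC, conjTranspose_mul, Matrix.conjTranspose_nonsing_inv, mul_assoc]
    have t2 : (C j)ᴴ * C i
        = ((B 0)ᴴ)⁻¹ * ((B (j.val+1))ᴴ * B (i.val+1) * (B 0)⁻¹) := by
      simp only [hC, conjTranspose_mul, Matrix.conjTranspose_nonsing_inv, mul_assoc]
    have key : (C i)ᴴ * C j + (C j)ᴴ * C i = 0 := by
      rw [t1, t2, ← mul_add, ← add_mul, hg, zero_mul, mul_zero]
    have h2 : C i * C j + C j * C i = 0 := by
      have h3 : C i * C j + C j * C i = -((C i)ᴴ * C j + (C j)ᴴ * C i) := by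
        rw [hCskew i, hCskew j]
        noncomm_ring
      rw [h3, key, neg_zero]
    exact eq_neg_of_add_eq_zero_left h2
  have hCunit : ∀ i, IsUnit (C i) := by
    intro i
    rw [Matrix.isUnit_iff_isUnit_det, hC]
    simp only [Matrix.det_mul]
    exact (((Matrix.isUnit_iff_isUnit_det _).mp (hBunit _ (by omega)))).mul
      (Matrix.isUnit_nonsing_inv_det _ hd0)
  -- transport to endomorphisms
  set E : Fin (N-1) → Module.End ℂ (Fin N → ℂ) :=
    fun i => Matrix.toLinAlgEquiv' (C i) with hE
  have hEbij : ∀ i, Function.Bijective (E i) := by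
    intro i
    rw [← Module.End.isUnit_iff]
    exact (hCunit i).map Matrix.toLinAlgEquiv'
  have hEanti : ∀ i j, i ≠ j → E i * E j = -(E j * E i) := by
    intro i j hij
    have h := congrArg Matrix.toLinAlgEquiv' (hCanti i j hij)
    simpa [_root_.map_mul, _root_.map_neg] using h
  have hdvd := RFSDD.key (N-1) (Fin N → ℂ) E hEbij hEanti
  have hdvdN : 2 ^ ((N-1)/2) ∣ N := by
    rwa [Module.finrank_pi, Fintype.card_fin] at hdvd
  -- arithmetic: 2 ≤ N, 2^((N-1)/2) ∣ N ⇒ N ∈ {2,4,8}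
  clear_value B C E
  clear hanti hsum hsing hBgram hBanti hBunit hd0 hd0' hCskew hCanti hCunit hEbij hEanti hdvd
  clear hB hC hE E C B A
  have hk4 : ∀ k, 4 ≤ k → 2*k + 2 < 2^k := by
    intro k hk
    induction k, hk using Nat.le_induction with
    | base => norm_num
    | succ n hn ih =>
        rw [pow_succ]
        have h2n : 2*n+2 < 2^n := ih
        omega
  have hle : 2 ^ ((N-1)/2) ≤ N := Nat.le_of_dvd (by omega) hdvdN
  have hN8 : N ≤ 8 := by
    by_contra hgt
    push_neg at hgt
    have h4 : 4 ≤ (N-1)/2 := by omega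
    have h5 := hk4 _ h4
    omega
  interval_cases N <;> revert hdvdN <;> decide
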